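/- For every integer b ≥ 2, the generalized Somos constant satisfies σ_b = (b/(b-1)) · exp(-γ(1/b)/b), where γ(z) = Σ_{i=1}^∞ z^{i-1} (1/i - log((i+1)/i)) is the generalized Euler-constant function. -/

import Mathlib

open Real

/-- The generalized Somos constant `σ_b = ∏_{i=1}^∞ i^{(b-1)/b^i}`. -/
noncomputable def somosB (b : ℕ) : ℝ :=
  ∏' i : ℕ, ((i : ℝ) + 1) ^ (((b : ℝ) - 1) / (b : ℝ) ^ (i + 1))

/-- The generalized Euler-constant function
`γ(z) = ∑_{i=1}^∞ z^{i-1} (1/i - log((i+1)/i))`. -/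
noncomputable def eulerGamma (z : ℝ) : ℝ :=
  ∑' i : ℕ, z ^ i * (((i : ℝ) + 1)⁻¹ - Real.log (((i : ℝ) + 2) / ((i : ℝ) + 1)))

private lemma hasSum_ext {f g : ℕ → ℝ} {a : ℝ} (h : ∀ i, f i = g i) (hf : HasSum f a) :
    HasSum g a := by rwa [funext h] at hf

private lemma hasProd_ext {f g : ℕ → ℝ} {a : ℝ} (h : ∀ i, f i = g i) (hf : HasProd f a) :
    HasProd g a := by rwa [funext h] at hf

private lemma log_mul_geom_summable {x c : ℝ} (hx0 : 0 ≤ x) (hx1 : x < 1) (hc : 0 ≤ c) :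
    Summable (fun i : ℕ => Real.log ((i : ℝ) + 1) * (c * x ^ i)) := by
  have hb : Summable (fun i : ℕ => c * ((i : ℝ) ^ 1 * x ^ i)) :=
    (summable_pow_mul_geometric_of_norm_lt_one 1
      (by rwa [Real.norm_eq_abs, abs_of_nonneg hx0])).mul_left c
  refine Summable.of_nonneg_of_le (fun i => ?_) (fun i => ?_) hb
  · have h1 : (0:ℝ) ≤ Real.log ((i:ℝ)+1) := Real.log_nonneg (le_add_of_nonneg_left (Nat.cast_nonneg i))
    exact mul_nonneg h1 (mul_nonneg hc (pow_nonneg hx0 i))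
  · have h1 : Real.log ((i:ℝ)+1) ≤ (i:ℝ) := by
      have := Real.log_le_sub_one_of_pos (x := (i:ℝ)+1) (by positivity)
      linarith
    calc Real.log ((i:ℝ)+1) * (c * x ^ i) ≤ (i:ℝ) * (c * x^i) :=
          mul_le_mul_of_nonneg_right h1 (by positivity)
      _ = c * ((i:ℝ)^1 * x^i) := by ring

/-- For every integer `b ≥ 2`, `σ_b = (b/(b-1)) exp(-γ(1/b)/b)`. -/
theorem somosB_eq_exp_eulerGamma (b : ℕ) (hb : 2 ≤ b) :
    somosB b = ((b : ℝ) / ((b : ℝ) - 1)) * Real.exp (-(eulerGamma ((b : ℝ))⁻¹) / (b : ℝ)) := by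
  set B : ℝ := (b : ℝ) with hBdef
  have hB2 : (2:ℝ) ≤ B := by rw [hBdef]; exact_mod_cast hb
  have hB0 : (0:ℝ) < B := by linarith
  have hBne : B ≠ 0 := ne_of_gt hB0
  have hB1 : (0:ℝ) < B - 1 := by linarith
  set x : ℝ := B⁻¹ with hxdef
  have hx0 : 0 < x := by positivity
  have hx1 : x < 1 := by
    rw [hxdef, inv_lt_one_iff₀]; right; linarith
  have hxB : x * B = 1 := inv_mul_cancel₀ hBne
  set f : ℕ → ℝ := fun i => Real.log ((i:ℝ)+1) * ((B - 1) / B ^ (i+1)) with hfdef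
  have hfx : ∀ i, f i = Real.log ((i:ℝ)+1) * ((B-1) * x * x ^ i) := by
    intro i
    rw [hfdef]
    simp only [hxdef, div_eq_mul_inv, ← inv_pow, pow_succ]
    ring
  have hf_summ : Summable f := by
    refine (log_mul_geom_summable hx0.le hx1 (c := (B-1)*x) (by positivity)).congr ?_
    intro i; exact (hfx i).symm
  set S : ℝ := ∑' i, f i with hSdef
  have hfS : HasSum f S := hf_summ.hasSum
  set u : ℕ → ℝ := fun i => x ^ (i+1) * Real.log ((i:ℝ)+1) with hudef
  have hu_summ : Summable u := by
    refine (log_mul_geom_summable hx0.le hx1 (c := x) (by positivity)).congr ?_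
    intro i; simp only [hudef]; ring
  set T : ℝ := ∑' i, u i with hTdef
  have huT : HasSum u T := hu_summ.hasSum
  have hf0 : f 0 = 0 := by simp [hfdef]
  have hu0 : u 0 = 0 := by simp [hudef]
  have hfS' : HasSum (fun n => f (n+1)) S := by
    rw [hasSum_nat_add_iff 1]
    simpa [hf0] using hfS
  have huT' : HasSum (fun n => u (n+1)) T := by
    rw [hasSum_nat_add_iff 1]
    simpa [hu0] using huT
  have hBx : (B-1) * x = 1 - x := by nlinarith [hxB]
  have hv : HasSum (fun i : ℕ => x ^ (i+1) * Real.log ((i:ℝ)+2)) (S + T) := by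
    refine hasSum_ext (fun i => ?_) (hfS'.add huT')
    rw [hfx, hudef]
    push_cast
    have h1 : ((i:ℝ)+1)+1 = (i:ℝ)+2 := by ring
    simp only [h1, hBx]
    ring
  have hw : HasSum (fun i : ℕ => x ^ (i+1) * Real.log (((i:ℝ)+2)/((i:ℝ)+1))) S := by
    have h2 := hv.sub huT
    rw [add_sub_cancel_right] at h2
    refine hasSum_ext (fun i => ?_) h2
    simp only [hudef]
    rw [Real.log_div (by positivity) (by positivity)]
    ring
  have habs : |x| < 1 := by rw [abs_of_pos hx0]; exact hx1
  have hA0 := Real.hasSum_pow_div_log_of_abs_lt_one habs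
  have h1x : 1 - x = (B-1)/B := by rw [hxdef]; field_simp
  set A : ℝ := Real.log (B/(B-1)) with hAdef
  have hA : HasSum (fun i : ℕ => x ^ (i+1) / ((i:ℝ)+1)) A := by
    have h3 : -Real.log (1-x) = A := by
      rw [h1x, ← Real.log_inv, inv_div, hAdef]
    rwa [h3] at hA0
  have hG : HasSum (fun i : ℕ => x ^ i * (((i:ℝ)+1)⁻¹ -
      Real.log (((i:ℝ)+2)/((i:ℝ)+1)))) (B * A - B * S) := by
    refine hasSum_ext (fun i => ?_) ((hA.mul_left B).sub (hw.mul_left B))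
    have hxp : x ^ i = B * x ^ (i+1) := by
      rw [pow_succ, hxdef, mul_comm, mul_assoc, inv_mul_cancel₀ hBne, mul_one]
    rw [hxp]
    field_simp
  have hGam : eulerGamma B⁻¹ = B * A - B * S := by
    rw [← hxdef, eulerGamma]
    exact hG.tsum_eq
  have hsom : somosB b = Real.exp S := by
    rw [somosB, ← hBdef]
    have hp : HasProd (fun i : ℕ => ((i:ℝ)+1) ^ ((B-1)/B^(i+1))) (Real.exp S) := by
      refine hasProd_ext (fun i => ?_) hfS.rexp
      rw [Function.comp_apply, hfdef, Real.rpow_def_of_pos (by positivity)]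
    exact hp.tprod_eq
  rw [hsom, hGam]
  have hexpA : Real.exp A = B / (B-1) := Real.exp_log (by positivity)
  have h4 : -(B * A - B * S) / B = S - A := by field_simp; ring
  rw [h4, Real.exp_sub, hexpA]
  field_simp
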